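/- arXiv:1501.04166 — 3 statements merged into one kernel-verified Lean document; each statement's English description precedes it below -/
import Mathlib

section
/- Let F be analytic in the unit ball 𝔹ₙ ⊂ ℂⁿ, b ∈ ℂⁿ a direction, and L : 𝔹ₙ → ℝ₊ continuous. If F has bounded L-index in direction b with index N = N_b(F, L), then for every z⁰ ∈ 𝔹ₙ the slice function g_{z⁰}(t) = F(z⁰ + t b), analytic on S_{z⁰} = {t ∈ ℂ : z⁰ + t b ∈ 𝔹ₙ}, has bounded l_{z⁰}-index with N(g_{z⁰}, l_{z⁰}) ≤ N, where l_{z⁰}(t) = L(z⁰ + t b). The key identity is g_{z⁰}^{(p)}(t) = ∂ᵖF/∂bᵖ(z⁰ + t b) for all p. -/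
open Metric

/-- `p`-th directional derivative of `F` in direction `b` at `z`. -/
noncomputable def dirDeriv {n : ℕ} (F : EuclideanSpace ℂ (Fin n) → ℂ)
    (b : EuclideanSpace ℂ (Fin n)) (p : ℕ) (z : EuclideanSpace ℂ (Fin n)) : ℂ :=
  iteratedDeriv p (fun t : ℂ => F (z + t • b)) 0

/-- `F` has bounded `L`-index in direction `b` with index bound `m₀`. -/
def boundedIndexDir {n : ℕ} (F : EuclideanSpace ℂ (Fin n) → ℂ)
    (b : EuclideanSpace ℂ (Fin n)) (L : EuclideanSpace ℂ (Fin n) → ℝ) (m₀ : ℕ) : Prop :=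
  ∀ m : ℕ, ∀ z ∈ ball (0 : EuclideanSpace ℂ (Fin n)) 1,
    ‖dirDeriv F b m z‖ / ((m.factorial : ℝ) * L z ^ m) ≤
      (Finset.range (m₀ + 1)).sup' Finset.nonempty_range_add_one
        (fun k => ‖dirDeriv F b k z‖ / ((k.factorial : ℝ) * L z ^ k))

/-- One-variable analytic function `g` on the domain `D` has bounded `l`-index
with index bound `m₀`. -/
def oneIndexBounded (g : ℂ → ℂ) (l : ℂ → ℝ) (D : Set ℂ) (m₀ : ℕ) : Prop :=
  ∀ p : ℕ, ∀ t ∈ D,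
    ‖iteratedDeriv p g t‖ / ((p.factorial : ℝ) * l t ^ p) ≤
      (Finset.range (m₀ + 1)).sup' Finset.nonempty_range_add_one
        (fun k => ‖iteratedDeriv k g t‖ / ((k.factorial : ℝ) * l t ^ k))

/-- `N_b(F, L)`: the least index bound in direction `b`. -/
noncomputable def dirIndex {n : ℕ} (F : EuclideanSpace ℂ (Fin n) → ℂ)
    (b : EuclideanSpace ℂ (Fin n)) (L : EuclideanSpace ℂ (Fin n) → ℝ) : ℕ :=
  sInf {m | boundedIndexDir F b L m}

/-- `N(g, l)`: the least one-variable index bound on the domain `D`. -/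
noncomputable def oneIndex (g : ℂ → ℂ) (l : ℂ → ℝ) (D : Set ℂ) : ℕ :=
  sInf {m | oneIndexBounded g l D m}

/-- if `F` (analytic in the unit ball) has bounded `L`-index in
direction `b` with index `N = N_b(F,L)`, then for every `z⁰` in the ball the
slice `g_{z⁰}(t) = F(z⁰ + t b)` satisfies `g_{z⁰}^{(p)}(t) = ∂ᵖF/∂bᵖ(z⁰ + t b)`
and has bounded `l_{z⁰}`-index on `S_{z⁰}` with `N(g_{z⁰}, l_{z⁰}) ≤ N`. -/
theorem stmt9 (n : ℕ) (F : EuclideanSpace ℂ (Fin n) → ℂ)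
    (b : EuclideanSpace ℂ (Fin n)) (L : EuclideanSpace ℂ (Fin n) → ℝ)
    (hFa : AnalyticOnNhd ℂ F (ball (0 : EuclideanSpace ℂ (Fin n)) 1))
    (hLc : ContinuousOn L (ball (0 : EuclideanSpace ℂ (Fin n)) 1))
    (hLpos : ∀ z ∈ ball (0 : EuclideanSpace ℂ (Fin n)) 1, 0 < L z)
    (N : ℕ) (hN : boundedIndexDir F b L N) (hNleast : dirIndex F b L = N) :
    ∀ z0 ∈ ball (0 : EuclideanSpace ℂ (Fin n)) 1,
      (∀ (p : ℕ) (t : ℂ), z0 + t • b ∈ ball (0 : EuclideanSpace ℂ (Fin n)) 1 →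
          iteratedDeriv p (fun s : ℂ => F (z0 + s • b)) t = dirDeriv F b p (z0 + t • b)) ∧
        oneIndexBounded (fun t : ℂ => F (z0 + t • b)) (fun t : ℂ => L (z0 + t • b))
          {t : ℂ | z0 + t • b ∈ ball (0 : EuclideanSpace ℂ (Fin n)) 1} N ∧
        oneIndex (fun t : ℂ => F (z0 + t • b)) (fun t : ℂ => L (z0 + t • b))
          {t : ℂ | z0 + t • b ∈ ball (0 : EuclideanSpace ℂ (Fin n)) 1} ≤ N := by
  intro z0 hz0
  have key : ∀ (p : ℕ) (t : ℂ),
      iteratedDeriv p (fun s : ℂ => F (z0 + s • b)) t = dirDeriv F b p (z0 + t • b) := by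
    intro p t
    unfold dirDeriv
    have h1 : (fun s : ℂ => F (z0 + t • b + s • b)) = fun s : ℂ => F (z0 + (t + s) • b) := by
      funext s; rw [add_smul, add_assoc]
    rw [h1]
    have h2 := iteratedDeriv_comp_const_add p (fun s : ℂ => F (z0 + s • b)) t
    have := congrFun h2 0
    rw [this, add_zero]
  have hbnd : oneIndexBounded (fun t : ℂ => F (z0 + t • b)) (fun t : ℂ => L (z0 + t • b))
      {t : ℂ | z0 + t • b ∈ ball (0 : EuclideanSpace ℂ (Fin n)) 1} N := by
    intro p t ht
    have := hN p (z0 + t • b) ht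
    simp only [key]
    exact this
  refine ⟨fun p t _ => key p t, hbnd, ?_⟩
  exact Nat.sInf_le hbnd
end

section
/- Let F be analytic in 𝔹ₙ, b ∈ ℂⁿ, L : 𝔹ₙ → ℝ₊ continuous, and suppose there exists M ∈ ℤ₊ such that for every z⁰ ∈ 𝔹ₙ the slice function g_{z⁰}(t) = F(z⁰ + t b) has bounded l_{z⁰}-index with N(g_{z⁰}, l_{z⁰}) ≤ M, where l_{z⁰}(t) = L(z⁰ + t b). Then F has bounded L-index in direction b and N_b(F, L) = sup{N(g_{z⁰}, l_{z⁰}) : z⁰ ∈ 𝔹ₙ}. -/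
open Metric

lemma oneIndexBounded_mono {g : ℂ → ℂ} {l : ℂ → ℝ} {D : Set ℂ} {m m' : ℕ}
    (h : oneIndexBounded g l D m) (hmm : m ≤ m') : oneIndexBounded g l D m' := by
  intro p t ht
  refine (h p t ht).trans ?_
  exact Finset.sup'_mono (f := fun k =>
      ‖iteratedDeriv k g t‖ / ((k.factorial : ℝ) * l t ^ k))
    (Finset.range_subset_range.mpr (Nat.succ_le_succ hmm)) Finset.nonempty_range_add_one

lemma slice_deriv {n : ℕ} (F : EuclideanSpace ℂ (Fin n) → ℂ) (b : EuclideanSpace ℂ (Fin n))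
    (z0 : EuclideanSpace ℂ (Fin n)) (t : ℂ) (p : ℕ) :
    iteratedDeriv p (fun s : ℂ => F (z0 + s • b)) t = dirDeriv F b p (z0 + t • b) := by
  unfold dirDeriv
  have : (fun s : ℂ => F (z0 + t • b + s • b)) = fun s : ℂ => F (z0 + (t + s) • b) := by
    funext s; rw [add_smul, add_assoc]
  rw [this]
  have h2 := iteratedDeriv_comp_const_add p (fun s : ℂ => F (z0 + s • b)) t
  exact ((congrFun h2 0).trans (by rw [add_zero])).symm

lemma equiv_slices {n : ℕ} (F : EuclideanSpace ℂ (Fin n) → ℂ) (b : EuclideanSpace ℂ (Fin n))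
    (L : EuclideanSpace ℂ (Fin n) → ℝ) (m : ℕ) :
    boundedIndexDir F b L m ↔
      ∀ z0 ∈ ball (0 : EuclideanSpace ℂ (Fin n)) 1,
        oneIndexBounded (fun t : ℂ => F (z0 + t • b)) (fun t : ℂ => L (z0 + t • b))
          {t : ℂ | z0 + t • b ∈ ball (0 : EuclideanSpace ℂ (Fin n)) 1} m := by
  constructor
  · intro h z0 _ p t ht
    have h1 := h p (z0 + t • b) ht
    simpa only [slice_deriv] using h1
  · intro h p z hz
    have h1 := h z hz p 0 (by simpa using hz)
    simpa only [slice_deriv, zero_smul, add_zero] using h1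

/-- if there is `M` such that every slice `g_{z⁰}(t) = F(z⁰ + t b)`
has bounded `l_{z⁰}`-index on `S_{z⁰}` with bound `M`, then `F` has bounded
`L`-index in direction `b`, and
`N_b(F, L) = sup{N(g_{z⁰}, l_{z⁰}) : z⁰ ∈ 𝔹ₙ}`. -/
theorem stmt10 (n : ℕ) (F : EuclideanSpace ℂ (Fin n) → ℂ)
    (b : EuclideanSpace ℂ (Fin n)) (L : EuclideanSpace ℂ (Fin n) → ℝ)
    (hFa : AnalyticOnNhd ℂ F (ball (0 : EuclideanSpace ℂ (Fin n)) 1))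
    (hLc : ContinuousOn L (ball (0 : EuclideanSpace ℂ (Fin n)) 1))
    (hLpos : ∀ z ∈ ball (0 : EuclideanSpace ℂ (Fin n)) 1, 0 < L z)
    (M : ℕ)
    (hM : ∀ z0 ∈ ball (0 : EuclideanSpace ℂ (Fin n)) 1,
      oneIndexBounded (fun t : ℂ => F (z0 + t • b)) (fun t : ℂ => L (z0 + t • b))
        {t : ℂ | z0 + t • b ∈ ball (0 : EuclideanSpace ℂ (Fin n)) 1} M) :
    (∃ m : ℕ, boundedIndexDir F b L m) ∧
      dirIndex F b L =
        ⨆ z0 ∈ ball (0 : EuclideanSpace ℂ (Fin n)) 1,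
          oneIndex (fun t : ℂ => F (z0 + t • b)) (fun t : ℂ => L (z0 + t • b))
            {t : ℂ | z0 + t • b ∈ ball (0 : EuclideanSpace ℂ (Fin n)) 1} := by
  
  classical
  set N : EuclideanSpace ℂ (Fin n) → ℕ := fun z0 =>
    oneIndex (fun t : ℂ => F (z0 + t • b)) (fun t : ℂ => L (z0 + t • b))
      {t : ℂ | z0 + t • b ∈ ball (0 : EuclideanSpace ℂ (Fin n)) 1} with hN
  have hNle : ∀ z0 ∈ ball (0 : EuclideanSpace ℂ (Fin n)) 1, N z0 ≤ M := fun z0 hz0 =>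
    Nat.sInf_le (hM z0 hz0)
  have hNmem : ∀ z0 ∈ ball (0 : EuclideanSpace ℂ (Fin n)) 1,
      oneIndexBounded (fun t : ℂ => F (z0 + t • b)) (fun t : ℂ => L (z0 + t • b))
        {t : ℂ | z0 + t • b ∈ ball (0 : EuclideanSpace ℂ (Fin n)) 1} (N z0) := by
    intro z0 hz0
    have hs : {m | oneIndexBounded (fun t : ℂ => F (z0 + t • b)) (fun t : ℂ => L (z0 + t • b))
        {t : ℂ | z0 + t • b ∈ ball (0 : EuclideanSpace ℂ (Fin n)) 1} m}.Nonempty :=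
      ⟨M, hM z0 hz0⟩
    exact Nat.sInf_mem hs
  have hbdd : boundedIndexDir F b L M := (equiv_slices F b L M).mpr hM
  refine ⟨⟨M, hbdd⟩, ?_⟩
  set K := ⨆ z0 ∈ ball (0 : EuclideanSpace ℂ (Fin n)) 1, N z0 with hK
  have hKle : K ≤ M := by
    refine ciSup_le' fun z0 => ciSup_le' fun hz0 => hNle z0 hz0
  have hleK : ∀ z0 ∈ ball (0 : EuclideanSpace ℂ (Fin n)) 1, N z0 ≤ K := by
    intro z0 hz0
    have h1 : N z0 ≤ ⨆ _ : z0 ∈ ball (0 : EuclideanSpace ℂ (Fin n)) 1, N z0 :=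
      le_ciSup (f := fun _ : z0 ∈ ball (0 : EuclideanSpace ℂ (Fin n)) 1 => N z0)
        (⟨M, by rintro x ⟨h, rfl⟩; exact hNle z0 hz0⟩) hz0
    refine h1.trans ?_
    exact le_ciSup (f := fun z0 => ⨆ _ : z0 ∈ ball (0 : EuclideanSpace ℂ (Fin n)) 1, N z0)
      ⟨M, by rintro x ⟨z, rfl⟩; exact ciSup_le' fun hz => hNle z hz⟩ z0
  apply le_antisymm
  · apply Nat.sInf_le
    refine (equiv_slices F b L K).mpr fun z0 hz0 =>
      oneIndexBounded_mono (hNmem z0 hz0) (hleK z0 hz0)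
  · have hs2 : {m | boundedIndexDir F b L m}.Nonempty := ⟨M, hbdd⟩
    have hmem : boundedIndexDir F b L (dirIndex F b L) := Nat.sInf_mem hs2
    have := (equiv_slices F b L _).mp hmem
    exact ciSup_le' fun z0 => ciSup_le' fun hz0 => Nat.sInf_le (this z0 hz0)
end

section
/- Let F be analytic in 𝔹ₙ, b ∈ ℂⁿ, L : 𝔹ₙ → ℝ₊ continuous, and let A ⊂ 𝔹ₙ be dense in 𝔹ₙ. Suppose there is M ∈ ℤ₊ such that for every z⁰ ∈ A and all t ∈ S_{z⁰}, p ∈ ℤ₊: (1/(p! L(z⁰+tb)ᵖ))|∂ᵖF/∂bᵖ(z⁰+tb)| ≤ max{(1/(k! L(z⁰+tb)ᵏ))|∂ᵏF/∂bᵏ(z⁰+tb)| : 0 ≤ k ≤ M}. Then the same inequality holds for all z⁰ ∈ 𝔹ₙ, t ∈ S_{z⁰}, p ∈ ℤ₊; hence F has bounded L-index in direction b with N_b(F,L) ≤ M. -/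
open Metric

noncomputable def dirIter {n : ℕ} (b : EuclideanSpace ℂ (Fin n)) :
    (EuclideanSpace ℂ (Fin n) → ℂ) → ℕ → (EuclideanSpace ℂ (Fin n) → ℂ)
  | G, 0 => G
  | G, (p+1) => dirIter b (fun w => fderiv ℂ G w b) p

lemma dirIter_analytic {n : ℕ} (b : EuclideanSpace ℂ (Fin n)) :
    ∀ (p : ℕ) (G : EuclideanSpace ℂ (Fin n) → ℂ),
      AnalyticOnNhd ℂ G (ball 0 1) → AnalyticOnNhd ℂ (dirIter b G p) (ball 0 1) := by
  intro p
  induction p with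
  | zero => intro G hG; exact hG
  | succ p ih =>
    intro G hG
    exact ih _ ((ContinuousLinearMap.apply ℂ ℂ b).comp_analyticOnNhd hG.fderiv)

lemma dirDeriv_eq_dirIter {n : ℕ} (b : EuclideanSpace ℂ (Fin n)) :
    ∀ (p : ℕ) (G : EuclideanSpace ℂ (Fin n) → ℂ),
      AnalyticOnNhd ℂ G (ball 0 1) → ∀ z ∈ ball (0 : EuclideanSpace ℂ (Fin n)) 1,
      iteratedDeriv p (fun t : ℂ => G (z + t • b)) 0 = dirIter b G p z := by
  intro p
  induction p with
  | zero => intro G hG z hz; simp [dirIter, iteratedDeriv_zero]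
  | succ p ih =>
    intro G hG z hz
    rw [iteratedDeriv_succ']
    have hU : IsOpen {t : ℂ | z + t • b ∈ ball (0 : EuclideanSpace ℂ (Fin n)) 1} :=
      isOpen_ball.preimage (by continuity)
    have h0 : (0 : ℂ) ∈ {t : ℂ | z + t • b ∈ ball (0 : EuclideanSpace ℂ (Fin n)) 1} := by
      simpa using hz
    have hEq : (deriv fun s : ℂ => G (z + s • b)) =ᶠ[nhds (0:ℂ)]
        (fun t : ℂ => (fun w => fderiv ℂ G w b) (z + t • b)) := by
      filter_upwards [hU.mem_nhds h0] with t ht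
      have hline : HasDerivAt (fun s : ℂ => z + s • b) b t := by
        simpa using ((hasDerivAt_id t).smul_const b).const_add z
      have hGd := (hG.differentiableOn.differentiableAt (isOpen_ball.mem_nhds ht)).hasFDerivAt
      have := hGd.comp_hasDerivAt t hline
      exact this.deriv
    rw [hEq.iteratedDeriv_eq p]
    exact ih _ ((ContinuousLinearMap.apply ℂ ℂ b).comp_analyticOnNhd hG.fderiv) z hz

/-- if the index inequality with bound `M` holds along all slices
through points of a set `A` dense in the unit ball, then it holds on the whole
ball, i.e. `F` has bounded `L`-index in direction `b` with `N_b(F,L) ≤ M`. -/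
theorem stmt11 (n : ℕ) (F : EuclideanSpace ℂ (Fin n) → ℂ)
    (b : EuclideanSpace ℂ (Fin n)) (L : EuclideanSpace ℂ (Fin n) → ℝ)
    (hFa : AnalyticOnNhd ℂ F (ball (0 : EuclideanSpace ℂ (Fin n)) 1))
    (hLc : ContinuousOn L (ball (0 : EuclideanSpace ℂ (Fin n)) 1))
    (hLpos : ∀ z ∈ ball (0 : EuclideanSpace ℂ (Fin n)) 1, 0 < L z)
    (A : Set (EuclideanSpace ℂ (Fin n)))
    (hA : A ⊆ ball (0 : EuclideanSpace ℂ (Fin n)) 1)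
    (hAdense : ball (0 : EuclideanSpace ℂ (Fin n)) 1 ⊆ closure A)
    (M : ℕ)
    (hM : ∀ z0 ∈ A, ∀ t : ℂ, z0 + t • b ∈ ball (0 : EuclideanSpace ℂ (Fin n)) 1 →
      ∀ p : ℕ,
        ‖dirDeriv F b p (z0 + t • b)‖ / ((p.factorial : ℝ) * L (z0 + t • b) ^ p) ≤
          (Finset.range (M + 1)).sup' Finset.nonempty_range_add_one
            (fun k => ‖dirDeriv F b k (z0 + t • b)‖ /
              ((k.factorial : ℝ) * L (z0 + t • b) ^ k))) :
    (∀ z0 ∈ ball (0 : EuclideanSpace ℂ (Fin n)) 1, ∀ t : ℂ,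
        z0 + t • b ∈ ball (0 : EuclideanSpace ℂ (Fin n)) 1 → ∀ p : ℕ,
        ‖dirDeriv F b p (z0 + t • b)‖ / ((p.factorial : ℝ) * L (z0 + t • b) ^ p) ≤
          (Finset.range (M + 1)).sup' Finset.nonempty_range_add_one
            (fun k => ‖dirDeriv F b k (z0 + t • b)‖ /
              ((k.factorial : ℝ) * L (z0 + t • b) ^ k))) ∧
      boundedIndexDir F b L M ∧ dirIndex F b L ≤ M := by
  set B := ball (0 : EuclideanSpace ℂ (Fin n)) 1 with hB
  set φ : ℕ → EuclideanSpace ℂ (Fin n) → ℝ :=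
    fun p w => ‖dirDeriv F b p w‖ / ((p.factorial : ℝ) * L w ^ p) with hφdef
  have hEq : ∀ p, ∀ z ∈ B, dirDeriv F b p z = dirIter b F p z := fun p z hz =>
    dirDeriv_eq_dirIter b p F hFa z hz
  have hφcont : ∀ p, ContinuousOn (φ p) B := by
    intro p
    have h1 : ContinuousOn (fun w => ‖dirIter b F p w‖ /
        ((p.factorial : ℝ) * L w ^ p)) B := by
      apply ContinuousOn.div
      · exact ((dirIter_analytic b p F hFa).continuousOn).norm
      · exact (continuousOn_const.mul (hLc.pow p))
      · intro w hw
        have := hLpos w hw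
        positivity
    exact h1.congr fun w hw => by simp [hφdef, hEq p w hw]
  have key : ∀ w ∈ B, ∀ p, φ p w ≤
      (Finset.range (M + 1)).sup' Finset.nonempty_range_add_one (fun k => φ k w) := by
    intro w hw p
    have hne : (nhdsWithin w A).NeBot :=
      mem_closure_iff_nhdsWithin_neBot.mp (hAdense hw)
    have hf : Filter.Tendsto (φ p) (nhdsWithin w A) (nhds (φ p w)) :=
      ((hφcont p) w hw).mono hA
    have hg : Filter.Tendsto
        (fun v => (Finset.range (M + 1)).sup' Finset.nonempty_range_add_one (fun k => φ k v))
        (nhdsWithin w A) (nhds ((Finset.range (M + 1)).sup' Finset.nonempty_range_add_one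
          (fun k => φ k w))) := by
      have hc : ContinuousOn
          (fun v => (Finset.range (M + 1)).sup' Finset.nonempty_range_add_one (fun k => φ k v)) B :=
        ContinuousOn.finset_sup'_apply Finset.nonempty_range_add_one fun i _ => hφcont i
      exact (hc w hw).mono hA
    refine le_of_tendsto_of_tendsto hf hg ?_
    filter_upwards [self_mem_nhdsWithin] with a ha
    have := hM a ha 0 (by simpa using hA ha) p
    simpa [hφdef] using this
  refine ⟨fun z0 _ t ht p => key _ ht p, fun m z hz => key z hz m, ?_⟩
  exact Nat.sInf_le (fun m z hz => key z hz m)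
end
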